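/- Let p be a prime and α, β ≥ 1. The characteristic function χ : ℤ/p^αℤ → ℤ/p^βℤ with χ(0) = 1 and χ(x) = 0 for x ≠ 0 has functional degree exactly β·p^α - (β-1)·p^{α-1} - 1. -/

import Mathlib

set_option linter.unusedSectionVars false
set_option linter.unusedVariables false
set_option maxHeartbeats 1000000

open Polynomial Finset AddMonoidAlgebra

/-- The discrete difference operator: `(dOp g f) x = f (x + g) - f x`. -/
def dOp {A B : Type*} [AddCommGroup A] [AddCommGroup B] (g : A) (f : A → B) : A → B :=
  fun x => f (x + g) - f x


lemma frob_modp (p : ℕ) [Fact p.Prime] (m : ℕ) :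
    (X - 1 : (ZMod p)[X]) ^ (p ^ m) = X ^ (p ^ m) - 1 := by
  simpa using sub_pow_char_pow (R := (ZMod p)[X]) X 1 (p := p) (n := m)

lemma frob_int (p : ℕ) (hp : p.Prime) (m : ℕ) :
    ∃ g : ℤ[X], (X - 1 : ℤ[X]) ^ (p ^ m) = X ^ (p ^ m) - 1 + (p : ℤ[X]) * g := by
  haveI : Fact p.Prime := ⟨hp⟩
  have hd : (C (p:ℤ)) ∣ ((X - 1 : ℤ[X]) ^ (p ^ m) - (X ^ (p ^ m) - 1)) := by
    rw [C_dvd_iff_dvd_coeff]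
    intro i
    have hmap : Polynomial.map (Int.castRingHom (ZMod p))
        ((X - 1 : ℤ[X]) ^ (p ^ m) - (X ^ (p ^ m) - 1)) = 0 := by
      push_cast [Polynomial.map_sub, Polynomial.map_pow, Polynomial.map_one, Polynomial.map_X]
      rw [frob_modp]
      ring
    have h2 := congrArg (fun q => Polynomial.coeff q i) hmap
    simp only [Polynomial.coeff_map, Polynomial.coeff_zero] at h2
    have h3 : ((((X - 1 : ℤ[X]) ^ (p ^ m) - (X ^ (p ^ m) - 1)).coeff i : ℤ) : ZMod p) = 0 := h2
    rwa [ZMod.intCast_zmod_eq_zero_iff_dvd] at h3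
  obtain ⟨g, hg⟩ := hd
  exact ⟨g, by rw [← C_eq_natCast, ← hg]; ring⟩

lemma theta_modp (p : ℕ) [Fact p.Prime] (m : ℕ) :
    (∑ i ∈ range p, ((X : (ZMod p)[X]) ^ (p ^ m)) ^ i) = (X - 1) ^ (p ^ (m+1) - p ^ m) := by
  have key : (∑ i ∈ range p, ((X : (ZMod p)[X]) ^ (p^m)) ^ i) * ((X:(ZMod p)[X]) ^ (p^m) - 1)
      = ((X ^ (p^m)) ^ p) - 1 := geom_sum_mul _ _
  have h1 : ((X ^ (p^m) : (ZMod p)[X]) ^ p) - 1 = (X - 1) ^ (p ^ (m+1)) := by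
    rw [← pow_mul, ← pow_succ, frob_modp]
  have h2 : ((X:(ZMod p)[X]) ^ (p^m) - 1) = (X - 1) ^ (p ^ m) := (frob_modp p m).symm
  have h3 : (X - 1 : (ZMod p)[X]) ^ (p ^ (m+1))
      = (X - 1) ^ (p ^ (m+1) - p ^ m) * (X - 1) ^ (p ^ m) := by
    rw [← pow_add]
    congr 1
    have : p ^ m ≤ p ^ (m+1) := Nat.pow_le_pow_right (Fact.out : p.Prime).pos m.le_succ
    omega
  have hne : (X - 1 : (ZMod p)[X]) ^ (p ^ m) ≠ 0 := by
    apply pow_ne_zero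
    have : (X - C 1 : (ZMod p)[X]) ≠ 0 := X_sub_C_ne_zero 1
    simpa using this
  apply mul_right_cancel₀ hne
  calc (∑ i ∈ range p, ((X : (ZMod p)[X]) ^ (p^m)) ^ i) * (X - 1) ^ (p ^ m)
      = (∑ i ∈ range p, ((X : (ZMod p)[X]) ^ (p^m)) ^ i) * (X ^ (p^m) - 1) := by rw [h2]
    _ = ((X ^ (p^m)) ^ p) - 1 := key
    _ = (X - 1) ^ (p ^ (m+1)) := h1
    _ = _ := h3

lemma theta_int (p : ℕ) (hp : p.Prime) (m : ℕ) :
    ∃ H : ℤ[X], (X - 1 : ℤ[X]) ^ (p ^ (m+1) - p ^ m)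
        = (∑ i ∈ range p, ((X : ℤ[X]) ^ (p ^ m)) ^ i) - (p : ℤ[X]) * H
      ∧ H.eval 1 = 1 := by
  haveI : Fact p.Prime := ⟨hp⟩
  have hd : (C (p:ℤ)) ∣ ((∑ i ∈ range p, ((X : ℤ[X]) ^ (p ^ m)) ^ i)
      - (X - 1 : ℤ[X]) ^ (p ^ (m+1) - p ^ m)) := by
    rw [C_dvd_iff_dvd_coeff]
    intro i
    have hmap : Polynomial.map (Int.castRingHom (ZMod p))
        ((∑ i ∈ range p, ((X : ℤ[X]) ^ (p ^ m)) ^ i)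
          - (X - 1 : ℤ[X]) ^ (p ^ (m+1) - p ^ m)) = 0 := by
      push_cast [Polynomial.map_sub, Polynomial.map_pow, Polynomial.map_one, Polynomial.map_X,
        Polynomial.map_sum]
      rw [theta_modp]
      ring
    have h2 := congrArg (fun q => Polynomial.coeff q i) hmap
    simp only [Polynomial.coeff_map, Polynomial.coeff_zero] at h2
    have h3 : ((((∑ i ∈ range p, ((X : ℤ[X]) ^ (p ^ m)) ^ i)
        - (X - 1 : ℤ[X]) ^ (p ^ (m+1) - p ^ m)).coeff i : ℤ) : ZMod p) = 0 := h2
    rwa [ZMod.intCast_zmod_eq_zero_iff_dvd] at h3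
  obtain ⟨H, hH⟩ := hd
  have hid : (X - 1 : ℤ[X]) ^ (p ^ (m+1) - p ^ m)
      = (∑ i ∈ range p, ((X : ℤ[X]) ^ (p ^ m)) ^ i) - (p : ℤ[X]) * H := by
    rw [← C_eq_natCast, ← hH]; ring
  refine ⟨H, hid, ?_⟩
  have := congrArg (fun q => Polynomial.eval 1 q) hid
  simp only [eval_sub, eval_pow, eval_one, eval_X, eval_mul, eval_natCast, eval_finset_sum] at this
  have hφ : 1 ≤ p ^ (m+1) - p ^ m := by
    have h1 : p ^ m < p ^ (m+1) := Nat.pow_lt_pow_right (Fact.out : p.Prime).one_lt m.lt_succ_self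
    omega
  rw [sub_self, zero_pow (by omega : p ^ (m+1) - p ^ m ≠ 0)] at this
  simp only [one_pow] at this
  rw [Finset.sum_const, Finset.card_range] at this
  simp only [nsmul_eq_mul, mul_one] at this
  have hp0 : (p:ℤ) ≠ 0 := Int.natCast_ne_zero.mpr (Fact.out : p.Prime).pos.ne'
  have h5 : (p:ℤ) * eval 1 H = p * 1 := by linarith
  exact mul_left_cancel₀ hp0 h5


lemma ringHom_aeval {B C : Type*} [CommRing B] [CommRing C] (f : B →+* C) (b : B) (F : ℤ[X]) :
    f (Polynomial.aeval b F) = Polynomial.aeval (f b) F :=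
  (Polynomial.aeval_algHom_apply f.toIntAlgHom b F).symm

lemma frob_transfer {B : Type*} [CommRing B] (p : ℕ) (hp : p.Prime) (m : ℕ) (b : B) :
    ∃ γ : B, (b - 1)^(p^m) = (b^(p^m) - 1) + (p:B) * γ := by
  obtain ⟨g, hg⟩ := frob_int p hp m
  refine ⟨Polynomial.aeval b g, ?_⟩
  have := congrArg (Polynomial.aeval b) hg
  simpa using this

lemma theta_transfer {B : Type*} [CommRing B] (p : ℕ) (hp : p.Prime) (m : ℕ) (b : B) :
    ∃ H : ℤ[X], (b-1)^(p^(m+1) - p^m) = (∑ i ∈ range p, (b^(p^m))^i) - (p:B) * Polynomial.aeval b H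
      ∧ H.eval 1 = 1 := by
  obtain ⟨H, hid, he⟩ := theta_int p hp m
  refine ⟨H, ?_, he⟩
  have := congrArg (Polynomial.aeval b) hid
  simpa using this

lemma eval_one_transfer {B : Type*} [CommRing B] (b : B) (F : ℤ[X]) :
    ∃ w : B, Polynomial.aeval b F = ((F.eval 1 : ℤ) : B) + (b - 1) * w := by
  have h := Polynomial.sub_dvd_eval_sub b 1 (F.map (algebraMap ℤ B))
  rw [Polynomial.eval_map, Polynomial.eval_map, Polynomial.eval₂_at_one] at h
  obtain ⟨w, hw⟩ := h
  refine ⟨w, ?_⟩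
  have : Polynomial.aeval b F = Polynomial.eval₂ (algebraMap ℤ B) b F := rfl
  rw [this]
  rw [sub_eq_iff_eq_add] at hw
  rw [hw, show (algebraMap ℤ B) (F.eval 1) = ((F.eval 1 : ℤ) : B) from by simp [algebraMap_int_eq]]
  ring

-- c_eval
lemma c_eval (β : ℕ) (hβ : 1 ≤ β) :
    ∑ i ∈ range β, ((-1:ℤ)^(β-1-i) * (β.choose (i+1))) = -(-1)^β := by
  have hS : ∑ j ∈ range (β+1), ((-1:ℤ)^(β-j) * (β.choose j)) = 0 := by
    have h1 : ∀ j ∈ range (β+1), ((-1:ℤ)^(β-j) * (β.choose j))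
        = (-1)^β * ((-1)^j * (β.choose j)) := by
      intro j hj
      rw [mem_range] at hj
      have hjβ : j ≤ β := by omega
      have hjj : (-1:ℤ)^(β-j) * (-1)^j = (-1)^β := by
        rw [← pow_add]
        congr 1
        omega
      have h2 : ((-1:ℤ)^j)*((-1:ℤ)^j) = 1 := by
        rw [← pow_add, Even.neg_one_pow ⟨j, by ring⟩]
      have h3 : (-1:ℤ)^β * (-1)^j = (-1)^(β-j) := by
        rw [← hjj, mul_assoc, h2, mul_one]
      rw [← h3]
      ring
    rw [Finset.sum_congr rfl h1, ← Finset.mul_sum,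
      Int.alternating_sum_range_choose_of_ne (by omega : β ≠ 0), mul_zero]
  rw [Finset.sum_range_succ'] at hS
  simp only [Nat.sub_zero, Nat.choose_zero_right, Nat.cast_one, mul_one] at hS
  have : ∀ i ∈ range β, ((-1:ℤ)^(β-(i+1)) * (β.choose (i+1)))
      = ((-1:ℤ)^(β-1-i) * (β.choose (i+1))) := by
    intro i hi
    congr 2
    omega
  rw [Finset.sum_congr rfl this] at hS
  linarith



section trans
variable {G : Type*} [AddCommGroup G] [Fintype G] [DecidableEq G] {k : Type*} [CommRing k]

noncomputable def e (f : G → k) : AddMonoidAlgebra k G :=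
  AddMonoidAlgebra.ofCoeff (Finsupp.equivFunOnFinite.symm f)

lemma e_apply (f : G → k) (a : G) : (e f).coeff a = f a := rfl

lemma e_zero : e (0 : G → k) = 0 := by ext a; rw [e_apply]; rfl

lemma e_dOp (f : G → k) (g : G) :
    e (dOp g f) = (AddMonoidAlgebra.single (-g) 1 - 1) * e f := by
  ext a
  rw [e_apply]
  show f (a + g) - f a = _
  rw [sub_mul, one_mul, AddMonoidAlgebra.coeff_sub, Finsupp.sub_apply,
    AddMonoidAlgebra.coeff_single_mul_apply]
  simp [e_apply, add_comm]

lemma e_iter (f : G → k) (g : G) (m : ℕ) :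
    e ((dOp g)^[m] f) = (AddMonoidAlgebra.single (-g) 1 - 1) ^ m * e f := by
  induction m with
  | zero => simp
  | succ n ih => rw [Function.iterate_succ_apply', e_dOp, ih, pow_succ]; ring

lemma e_inj : Function.Injective (e (G := G) (k := k)) :=
  AddMonoidAlgebra.ofCoeff_injective.comp Finsupp.equivFunOnFinite.symm.injective

lemma e_chi : e (fun x : G => if x = 0 then (1:k) else 0) = 1 := by
  ext a
  rw [e_apply]
  show _ = (AddMonoidAlgebra.single (0:G) (1:k)).coeff a
  rw [AddMonoidAlgebra.coeff_single, Finsupp.single_apply]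
  simp [eq_comm]

lemma iter_zero_iff (g : G) (m : ℕ) :
    (dOp g)^[m] (fun x : G => if x = 0 then (1:k) else 0) = 0 ↔
      (AddMonoidAlgebra.single (-g) (1:k) - 1) ^ m = 0 := by
  constructor
  · intro h
    have := congrArg e h
    rw [e_iter, e_chi, mul_one, e_zero] at this
    exact this
  · intro h
    apply e_inj
    rw [e_iter, e_chi, mul_one, h, e_zero]
end trans

section core
variable (p α β : ℕ) [hpf : Fact p.Prime]

noncomputable abbrev Aa := AddMonoidAlgebra (ZMod (p^β)) (ZMod (p^α))
noncomputable def τa : Aa p α β := AddMonoidAlgebra.single (-1) 1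

lemma τa_pow (n : ℕ) : τa p α β ^ n = AddMonoidAlgebra.single (-(n : ZMod (p^α))) 1 := by
  rw [τa, AddMonoidAlgebra.single_pow, one_pow]
  congr 1
  push_cast [nsmul_eq_mul]
  ring

lemma τa_pow_pa : τa p α β ^ (p^α) = 1 := by
  rw [τa_pow, ZMod.natCast_self, neg_zero]
  rfl

noncomputable def sa := τa p α β ^ (p^(α-1))

lemma sa_pow_p (hα : 1 ≤ α) : sa p α β ^ p = 1 := by
  rw [sa, ← pow_mul]
  have h : p ^ (α - 1) * p = p ^ α := by
    rw [← pow_succ]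
    congr 1
    omega
  rw [h, τa_pow_pa]

noncomputable def Θa := ∑ i ∈ Finset.range p, sa p α β ^ i

lemma Θa_mul_s (hα : 1 ≤ α) : sa p α β * Θa p α β = Θa p α β := by
  have h : (sa p α β - 1) * Θa p α β = 0 := by
    rw [mul_comm, Θa, geom_sum_mul, sa_pow_p p α β hα, sub_self]
  have h2 : sa p α β * Θa p α β - Θa p α β = 0 := by
    rw [← h]; ring
  linear_combination h2

lemma Θa_mul_spow (hα : 1 ≤ α) (i : ℕ) : sa p α β ^ i * Θa p α β = Θa p α β := by
  induction i with
  | zero => simp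
  | succ n ih => rw [pow_succ, mul_assoc, Θa_mul_s p α β hα, ih]

lemma Θa_sq (hα : 1 ≤ α) : Θa p α β * Θa p α β = (p : Aa p α β) * Θa p α β := by
  nth_rewrite 1 [Θa]
  rw [Finset.sum_mul]
  rw [Finset.sum_congr rfl (fun i _ => Θa_mul_spow p α β hα i),
    Finset.sum_const, Finset.card_range, nsmul_eq_mul]

lemma Θa_pow (hα : 1 ≤ α) (k : ℕ) :
    Θa p α β ^ (k+1) = (p : Aa p α β) ^ k * Θa p α β := by
  induction k with
  | zero => simp
  | succ n ih =>
      rw [pow_succ, ih, mul_assoc, Θa_sq p α β hα, pow_succ]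
      ring

lemma pA_pow_β : (p : Aa p α β) ^ β = 0 := by
  have h : ((p^β : ℕ) : Aa p α β) = 0 := by
    rw [← map_natCast (algebraMap (ZMod (p^β)) (Aa p α β)) (p^β), ZMod.natCast_self, map_zero]
  push_cast at h
  exact h


noncomputable def xa := τa p α β - 1
lemma Θa_mul_sub (hα : 1 ≤ α) : Θa p α β * (sa p α β - 1) = 0 := by
  rw [Θa, geom_sum_mul, sa_pow_p p α β hα, sub_self]

-- key identity
lemma key_id (hα : 1 ≤ α) (hβ : 1 ≤ β) (h : Aa p α β)
    (hh : xa p α β ^ (p^α - p^(α-1)) = Θa p α β - (p : Aa p α β) * h) :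
    xa p α β ^ (β * (p^α - p^(α-1)))
      = (p : Aa p α β)^(β-1) * Θa p α β *
          (∑ i ∈ Finset.range β, ((β.choose (i+1) : Aa p α β) * (-h)^(β-1-i))) := by
  rw [mul_comm β, pow_mul, hh, sub_eq_add_neg, add_pow, Finset.sum_range_succ']
  have hlast : Θa p α β ^ 0 * (-((p:Aa p α β) * h)) ^ (β - 0) * (β.choose 0 : Aa p α β) = 0 := by
    rw [pow_zero, one_mul, Nat.sub_zero, Nat.choose_zero_right, Nat.cast_one, mul_one]
    rw [show -((p:Aa p α β) * h) = (p:Aa p α β) * (-h) from by ring, mul_pow,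
      pA_pow_β, zero_mul]
  rw [hlast, add_zero]
  rw [Finset.mul_sum]
  apply Finset.sum_congr rfl
  intro i hi
  rw [Finset.mem_range] at hi
  rw [Θa_pow p α β hα i]
  rw [show -((p:Aa p α β) * h) = (p:Aa p α β) * (-h) from by ring, mul_pow]
  rw [show β - (i+1) = β - 1 - i from by omega]
  have hpw : (p:Aa p α β)^i * (p:Aa p α β)^(β-1-i) = (p:Aa p α β)^(β-1) := by
    rw [← pow_add]
    congr 1
    omega
  calc (p:Aa p α β)^i * Θa p α β * ((p:Aa p α β)^(β-1-i) * (-h)^(β-1-i)) * (β.choose (i+1) : Aa p α β)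
      = ((p:Aa p α β)^i * (p:Aa p α β)^(β-1-i)) * Θa p α β * ((β.choose (i+1) : Aa p α β) * (-h)^(β-1-i)) := by ring
    _ = _ := by rw [hpw]

lemma upper (hα : 1 ≤ α) (hβ : 1 ≤ β) (h : Aa p α β)
    (hh : xa p α β ^ (p^α - p^(α-1)) = Θa p α β - (p : Aa p α β) * h)
    (γ : Aa p α β)
    (hq : xa p α β ^ (p^(α-1)) = (sa p α β - 1) + (p : Aa p α β) * γ) :
    xa p α β ^ (β * (p^α - p^(α-1)) + p^(α-1)) = 0 := by
  rw [pow_add, key_id p α β hα hβ h hh, hq]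
  have E1 := Θa_mul_sub p α β hα
  have E2 : (p : Aa p α β)^(β-1) * (p : Aa p α β) = 0 := by
    rw [← pow_succ, show β - 1 + 1 = β from by omega, pA_pow_β]
  set g := (∑ i ∈ Finset.range β, ((β.choose (i+1) : Aa p α β) * (-h)^(β-1-i)))
  linear_combination ((p:Aa p α β)^(β-1) * g) * E1 + (Θa p α β * g * γ) * E2


end core

section bb
variable (p α : ℕ) [hpf : Fact p.Prime]

noncomputable abbrev Bb := AddMonoidAlgebra (ZMod p) (ZMod (p^α))
noncomputable def τb : Bb p α := AddMonoidAlgebra.single (-1) 1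

lemma τb_pow (n : ℕ) : τb p α ^ n = AddMonoidAlgebra.single (-(n : ZMod (p^α))) 1 := by
  rw [τb, AddMonoidAlgebra.single_pow, one_pow]
  congr 1
  push_cast [nsmul_eq_mul]
  ring

lemma τb_pow_pa : τb p α ^ (p^α) = 1 := by
  rw [τb_pow, ZMod.natCast_self, neg_zero]
  rfl

lemma xb_ne (hα : 1 ≤ α) : (τb p α - 1)^(p^α - 1) ≠ 0 := by
  intro h
  haveI : NeZero (p^α) := ⟨pow_ne_zero α hpf.out.pos.ne'⟩
  set n := p^α - 1 with hn
  have hexp : (τb p α - 1)^n = ∑ m ∈ range (n+1),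
      AddMonoidAlgebra.single (-(m : ZMod (p^α))) ((((-1)^(m+n) * (n.choose m) : ℤ)) : ZMod p) := by
    rw [sub_pow]
    apply Finset.sum_congr rfl
    intro m hm
    rw [one_pow, τb_pow]
    rw [show ((-1:Bb p α)^(m+n) * AddMonoidAlgebra.single (-(m : ZMod (p^α))) 1 * 1 * (n.choose m : Bb p α))
        = ((((-1)^(m+n) * (n.choose m) : ℤ)) : Bb p α) * AddMonoidAlgebra.single (-(m : ZMod (p^α))) 1 from by push_cast; ring]
    rw [← zsmul_eq_mul, AddMonoidAlgebra.smul_single]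
    congr 1
    simp
  have hc := congrArg (fun y : Bb p α => y.coeff (0 : ZMod (p^α))) h
  rw [hexp] at hc
  simp only [AddMonoidAlgebra.coeff_zero, Finsupp.coe_zero, Pi.zero_apply] at hc
  rw [AddMonoidAlgebra.coeff_sum, Finsupp.finset_sum_apply] at hc
  rw [Finset.sum_eq_single_of_mem 0 (Finset.mem_range.mpr (by omega))] at hc
  · simp only [Nat.cast_zero, neg_zero, Nat.choose_zero_right, Nat.cast_one, mul_one, zero_add,
      AddMonoidAlgebra.coeff_single, Finsupp.single_apply, if_pos rfl] at hc
    rcases Nat.even_or_odd n with he | ho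
    · rw [Even.neg_one_pow he] at hc
      simp at hc
    · rw [Odd.neg_one_pow ho] at hc
      simp at hc
  · intro b hb hb0
    rw [AddMonoidAlgebra.coeff_single, Finsupp.single_apply, if_neg]
    intro hb1
    rw [neg_eq_zero] at hb1
    have : p^α ∣ b := (ZMod.natCast_eq_zero_iff _ _).mp hb1
    rw [Finset.mem_range] at hb
    have hpa : 1 ≤ p^α := Nat.one_le_pow _ _ hpf.out.pos
    have hle := Nat.le_of_dvd (Nat.pos_of_ne_zero hb0) this
    omega
end bb

section pi
variable (p α β : ℕ) [hpf : Fact p.Prime] (hβ : β ≠ 0)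


noncomputable def ρ : ZMod (p^β) →+* ZMod p := ZMod.castHom (dvd_pow_self p hβ) (ZMod p)

noncomputable def πmap : Aa p α β →+* Bb p α :=
  letI : Algebra (ZMod (p^β)) (ZMod p) := (ρ p β hβ).toAlgebra
  ((AddMonoidAlgebra.lift (ZMod (p^β)) (Bb p α) (ZMod (p^α)))
    (AddMonoidAlgebra.of (ZMod p) (ZMod (p^α)))).toRingHom

lemma πmap_single (a : ZMod (p^α)) (c : ZMod (p^β)) :
    πmap p α β hβ (AddMonoidAlgebra.single a c) = AddMonoidAlgebra.single a (ρ p β hβ c) := by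
  letI : Algebra (ZMod (p^β)) (ZMod p) := (ρ p β hβ).toAlgebra
  show ((AddMonoidAlgebra.lift (ZMod (p^β)) (Bb p α) (ZMod (p^α)))
    (AddMonoidAlgebra.of (ZMod p) (ZMod (p^α)))) (AddMonoidAlgebra.single a c) = _
  rw [AddMonoidAlgebra.lift_single]
  rw [AddMonoidAlgebra.of_apply]
  rw [AddMonoidAlgebra.smul_single]
  congr 1
  rw [Algebra.smul_def, mul_one]
  rfl

lemma πmap_apply (z : Aa p α β) (a : ZMod (p^α)) :
    (πmap p α β hβ z).coeff a = ρ p β hβ (z.coeff a) := by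
  induction z using AddMonoidAlgebra.induction_linear with
  | zero => simp
  | add f g hf hg =>
      rw [map_add, AddMonoidAlgebra.coeff_add, AddMonoidAlgebra.coeff_add, Finsupp.add_apply,
        Finsupp.add_apply, map_add, hf, hg]
  | single b c =>
      rw [πmap_single]
      rw [AddMonoidAlgebra.coeff_single, AddMonoidAlgebra.coeff_single, Finsupp.single_apply,
        Finsupp.single_apply]
      split_ifs with hba
      · rfl
      · rw [map_zero]


lemma zmod_step (c : ZMod (p^β)) (hc : ((p : ZMod (p^β)))^(β-1) * c = 0) :
    ρ p β hβ c = 0 := by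
  haveI : NeZero (p^β) := ⟨pow_ne_zero β hpf.out.pos.ne'⟩
  have h4 : ((p^(β-1) * c.val : ℕ) : ZMod (p^β)) = 0 := by
    push_cast
    rw [ZMod.natCast_val, ZMod.cast_id]
    exact hc
  have h5 : p^β ∣ p^(β-1) * c.val := (ZMod.natCast_eq_zero_iff _ _).mp h4
  obtain ⟨k, hk⟩ := h5
  have h6 : p ∣ c.val := by
    refine ⟨k, ?_⟩
    have hpow : (0:ℕ) < p^(β-1) := pow_pos hpf.out.pos _
    refine Nat.eq_of_mul_eq_mul_left hpow ?_
    rw [hk, ← mul_assoc, ← pow_succ]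
    congr 2
    omega
  have h7 : ((c.val : ℕ) : ZMod p) = 0 := (ZMod.natCast_eq_zero_iff _ _).mpr h6
  rw [ρ, ZMod.castHom_apply, ← ZMod.natCast_val]
  exact h7

lemma stepA (z : Aa p α β) (hz : (p : Aa p α β)^(β-1) * z = 0) :
    πmap p α β hβ z = 0 := by
  ext a
  rw [πmap_apply]
  have h1 : ((p : Aa p α β)^(β-1) * z).coeff a = 0 := by rw [hz]; rfl
  have h2 : (p : Aa p α β)^(β-1) = ((p^(β-1) : ℕ) : Aa p α β) := by push_cast; rfl
  rw [h2, ← nsmul_eq_mul, AddMonoidAlgebra.coeff_smul, Finsupp.smul_apply] at h1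
  have h3 : ((p : ZMod (p^β)))^(β-1) * z.coeff a = 0 := by
    have : ((p^(β-1):ℕ) : ZMod (p^β)) * z.coeff a = 0 := by
      rw [← nsmul_eq_mul]
      exact_mod_cast h1
    push_cast at this
    exact this
  rw [zmod_step p β hβ (z.coeff a) h3]
  rfl


lemma lower (hβ : β ≠ 0) (hα : 1 ≤ α) (hβs : 1 ≤ β) (H : ℤ[X]) (hH1 : H.eval 1 = 1)
    (hh : xa p α β ^ (p^α - p^(α-1)) = Θa p α β - (p : Aa p α β) * (Polynomial.aeval (τa p α β) H)) :
    xa p α β ^ (β * (p^α - p^(α-1)) + p^(α-1) - 1) ≠ 0 := by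
  intro h0
  have hq1 : 1 ≤ p^(α-1) := Nat.one_le_pow _ _ hpf.out.pos
  have hqle : p^(α-1) ≤ p^α := Nat.pow_le_pow_right hpf.out.pos (by omega)
  set h := Polynomial.aeval (τa p α β) H with hhdef
  set g := ∑ i ∈ Finset.range β,
      ((β.choose (i+1) : Aa p α β) * (-h)^(β-1-i)) with hgdef
  have hkey := key_id p α β hα hβs h hh
  -- rewrite h0 into (p)^(β-1) * Z = 0
  have hz : (p : Aa p α β)^(β-1) * (Θa p α β * g * xa p α β ^(p^(α-1)-1)) = 0 := by
    have e1 : (p : Aa p α β)^(β-1) * (Θa p α β * g * xa p α β ^(p^(α-1)-1))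
        = xa p α β ^ (β * (p^α - p^(α-1))) * xa p α β ^(p^(α-1)-1) := by
      rw [hkey]; ring
    rw [e1, ← pow_add]
    have e2 : β * (p^α - p^(α-1)) + (p^(α-1)-1) = β * (p^α - p^(α-1)) + p^(α-1) - 1 := by
      omega
    rw [e2, h0]
  have hπ := stepA p α β hβ _ hz
  -- compute π of the product
  have πτ : πmap p α β hβ (τa p α β) = τb p α := by
    rw [τa, πmap_single, τb, map_one]
  have πx : πmap p α β hβ (xa p α β) = τb p α - 1 := by
    rw [xa, map_sub, map_one, πτ]
  have πh : πmap p α β hβ h = Polynomial.aeval (τb p α) H := by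
    have q : πmap p α β hβ (Polynomial.aeval (τa p α β) H) = Polynomial.aeval (πmap p α β hβ (τa p α β)) H :=
      ringHom_aeval (πmap p α β hβ) (τa p α β) H
    rw [hhdef, q, πτ]
  have πΘ : πmap p α β hβ (Θa p α β) = (τb p α - 1) ^ (p^α - p^(α-1)) := by
    have := congrArg (πmap p α β hβ) hh
    rw [map_sub, map_mul, map_pow, πx, map_natCast, πh] at this
    have hpB : (p : Bb p α) = 0 := by
      rw [← map_natCast (algebraMap (ZMod p) (Bb p α)) p, ZMod.natCast_self, map_zero]
    rw [hpB, zero_mul, sub_zero] at this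
    exact this.symm
  have πg : πmap p α β hβ g = ∑ i ∈ Finset.range β,
      ((β.choose (i+1) : Bb p α) * (-(Polynomial.aeval (τb p α) H))^(β-1-i)) := by
    rw [hgdef, map_sum]
    apply Finset.sum_congr rfl
    intro i hi
    rw [map_mul, map_natCast, map_pow, map_neg, πh]
  -- xb^{p^α} = 0
  have hxbz : (τb p α - 1)^(p^α) = 0 := by
    obtain ⟨γ2, hγ2⟩ := frob_transfer p hpf.out α (τb p α)
    rw [hγ2, τb_pow_pa, sub_self, zero_add]
    have hpB : (p : Bb p α) = 0 := by
      rw [← map_natCast (algebraMap (ZMod p) (Bb p α)) p, ZMod.natCast_self, map_zero]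
    rw [hpB, zero_mul]
  -- absorption
  obtain ⟨w, hw⟩ := eval_one_transfer (τb p α) H
  rw [hH1] at hw
  have hw' : Polynomial.aeval (τb p α) H = ((1:ℤ) : Bb p α) + (τb p α - 1) * w := hw
  have habs : ∀ j : ℕ, (τb p α - 1)^(p^α - 1) * (Polynomial.aeval (τb p α) H)^j
      = (τb p α - 1)^(p^α - 1) := by
    intro j
    induction j with
    | zero => rw [pow_zero, mul_one]
    | succ n ih =>
        rw [pow_succ, ← mul_assoc, ih, hw']
        push_cast
        rw [mul_add, mul_one, ← mul_assoc, ← pow_succ,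
          show p^α - 1 + 1 = p^α from by omega, hxbz, zero_mul, add_zero]
  -- assemble π Z
  have hπz : πmap p α β hβ (Θa p α β * g * xa p α β ^(p^(α-1)-1))
      = ((-(-1:ℤ)^β : ℤ) : Bb p α) * (τb p α - 1)^(p^α - 1) := by
    rw [map_mul, map_mul, map_pow, πΘ, πg, πx]
    rw [mul_comm ((τb p α - 1) ^ (p^α - p^(α-1))) _, mul_assoc, ← pow_add]
    have e3 : p^α - p^(α-1) + (p^(α-1) - 1) = p^α - 1 := by omega
    rw [e3, Finset.sum_mul]
    have e4 : ∀ i ∈ Finset.range β,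
        ((β.choose (i+1) : Bb p α) * (-(Polynomial.aeval (τb p α) H))^(β-1-i)) * (τb p α - 1)^(p^α - 1)
        = (((-1:ℤ)^(β-1-i) * (β.choose (i+1)) : ℤ) : Bb p α) * (τb p α - 1)^(p^α - 1) := by
      intro i hi
      rw [neg_pow]
      push_cast
      calc (β.choose (i+1) : Bb p α) * ((-1)^(β-1-i) * (Polynomial.aeval (τb p α) H)^(β-1-i)) * (τb p α - 1)^(p^α - 1)
          = (-1:Bb p α)^(β-1-i) * (β.choose (i+1) : Bb p α) *
              ((τb p α - 1)^(p^α - 1) * (Polynomial.aeval (τb p α) H)^(β-1-i)) := by ring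
        _ = (-1:Bb p α)^(β-1-i) * (β.choose (i+1) : Bb p α) * (τb p α - 1)^(p^α - 1) := by
              rw [habs]
        _ = _ := by ring
    rw [Finset.sum_congr rfl e4, ← Finset.sum_mul, ← Int.cast_sum, c_eval β hβs]
  rw [hπ] at hπz
  have hfin : ((-(-1:ℤ)^β : ℤ) : Bb p α) * (τb p α - 1)^(p^α - 1) = 0 := hπz.symm
  have hsq : ((-(-1:ℤ)^β) * (-(-1:ℤ)^β)) = 1 := by
    rw [neg_mul_neg, ← pow_add]
    exact Even.neg_one_pow ⟨β, by ring⟩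
  have hxz : (τb p α - 1)^(p^α - 1) = 0 := by
    have h2 : ((-(-1:ℤ)^β : ℤ) : Bb p α) * (((-(-1:ℤ)^β : ℤ) : Bb p α) * (τb p α - 1)^(p^α - 1)) = 0 := by
      rw [hfin, mul_zero]
    rwa [← mul_assoc, ← Int.cast_mul, hsq, Int.cast_one, one_mul] at h2
  exact xb_ne p α hα hxz
end pi


/-- The characteristic (Lagrange) function `χ : ℤ/p^αℤ → ℤ/p^βℤ` of `0` has functional
degree exactly `β p^α - (β-1) p^{α-1} - 1`: this number is the least `m` with
`Δ^{m+1} χ ≡ 0`. -/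
theorem fdeg_characteristic_function (p : ℕ) (hp : p.Prime) (α β : ℕ)
    (hα : 1 ≤ α) (hβ : 1 ≤ β) :
    IsLeast {m : ℕ |
        (dOp (1 : ZMod (p ^ α)))^[m + 1]
          (fun x : ZMod (p ^ α) => if x = 0 then (1 : ZMod (p ^ β)) else 0) = 0}
      (β * p ^ α - (β - 1) * p ^ (α - 1) - 1) := by
  haveI : Fact p.Prime := ⟨hp⟩
  have hq1 : 1 ≤ p^(α-1) := Nat.one_le_pow _ _ hp.pos
  have hqle : p^(α-1) ≤ p^α := Nat.pow_le_pow_right hp.pos (by omega)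
  have hmul : β*(p^α - p^(α-1)) + β*p^(α-1) = β*p^α := by
    rw [← Nat.mul_add]
    congr 1
    omega
  have hmul2 : (β-1)*p^(α-1) + p^(α-1) = β*p^(α-1) := by
    have : (β-1)*p^(α-1) + 1*p^(α-1) = ((β-1)+1)*p^(α-1) := by rw [Nat.add_mul]
    rw [one_mul] at this
    rw [this]
    congr 1
    omega
  have harith : β * p ^ α - (β - 1) * p ^ (α - 1) - 1 + 1
      = β * (p^α - p^(α-1)) + p^(α-1) := by omega
  obtain ⟨H, hh0, hH1⟩ := theta_transfer p hp (α-1) (τa p α β)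
  have hα1 : α - 1 + 1 = α := by omega
  rw [hα1] at hh0
  have hh : xa p α β ^ (p^α - p^(α-1))
      = Θa p α β - (p : Aa p α β) * (Polynomial.aeval (τa p α β) H) := by
    simp only [xa, Θa, sa]
    exact hh0
  obtain ⟨γ, hγ0⟩ := frob_transfer p hp (α-1) (τa p α β)
  have hγ : xa p α β ^ (p^(α-1)) = (sa p α β - 1) + (p : Aa p α β) * γ := by
    simp only [xa, sa]
    exact hγ0
  constructor
  · refine (iter_zero_iff (1 : ZMod (p^α)) _).mpr ?_
    rw [harith]
    have hu := upper p α β hα hβ _ hh γ hγ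
    simp only [xa, τa] at hu
    convert hu using 3
  · intro m hm
    have hm' := (iter_zero_iff (1 : ZMod (p^α)) (m+1)).mp hm
    by_contra hcon
    push_neg at hcon
    have hxm : xa p α β ^ (m+1) = 0 := by
      simp only [xa, τa]
      convert hm' using 3
    have hD : xa p α β ^ (β * (p^α - p^(α-1)) + p^(α-1) - 1) = 0 := by
      have hsplit : β * (p^α - p^(α-1)) + p^(α-1) - 1
          = (m+1) + (β * (p^α - p^(α-1)) + p^(α-1) - 1 - (m+1)) := by omega
      rw [hsplit, pow_add, hxm, zero_mul]
    exact (lower p α β (by omega) hα hβ H hH1 hh) hD
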